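/- For every L > 0 and every λ > 0 there exists a C³ function p : T → ℝ on the triangle T = {(x,y) : 0 ≤ x ≤ L, x ≤ y ≤ L} satisfying p_{xxx} + p_{yyy} + p_x + p_y = λ p in T, p(x,x) = 0 for all x ∈ [0,L], p_x(x,x) = (λ/3)·x for all x ∈ [0,L], and p(0,y) = 0 for all y ∈ [0,L]. -/

import Mathlib

open Filter Function

namespace ObsKernel


noncomputable def B (lam M : ℝ) (j k : ℕ) : ℝ :=
  lam * M^(j+k) * (2:ℝ)⁻¹^j / (j.factorial * k.factorial)

lemma fac1 (j : ℕ) : (((j+1).factorial : ℝ)) = ((j:ℝ)+1) * j.factorial := by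
  push_cast [Nat.factorial_succ]; ring
lemma fac2 (j : ℕ) : (((j+2).factorial : ℝ)) = ((j:ℝ)+2) * (((j:ℝ)+1) * j.factorial) := by
  push_cast [Nat.factorial_succ]; ring
lemma fac3 (j : ℕ) :
    (((j+3).factorial : ℝ)) = ((j:ℝ)+3) * (((j:ℝ)+2) * (((j:ℝ)+1) * j.factorial)) := by
  push_cast [Nat.factorial_succ]; ring

lemma T2 {lam M : ℝ} (hl : 0 < lam) (hM : 2 ≤ M) (j k : ℕ) :
    ((j:ℝ)+1)*((j:ℝ)+2)*((j:ℝ)+3) * B lam M (j+3) k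
      ≤ (1/12) * ((3*((k:ℝ)+1)*((k:ℝ)+2)*((j:ℝ)+1)) * B lam M (j+1) (k+2)) := by
  have hjf : (0:ℝ) < j.factorial := by exact_mod_cast j.factorial_pos
  have hkf : (0:ℝ) < k.factorial := by exact_mod_cast k.factorial_pos
  apply le_of_eq
  unfold B
  rw [fac3, fac1, fac2, show (j+3)+k = (j+k)+3 by ring, show (j+1)+(k+2) = (j+k)+3 by ring,
    pow_add, pow_add, pow_add]
  field_simp
  ring

lemma T4 {lam M : ℝ} (hl : 0 < lam) (hM : 2 ≤ M) (j k : ℕ) :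
    3*((k:ℝ)+1)*((j:ℝ)+1)*((j:ℝ)+2) * B lam M (j+2) (k+1)
      ≤ (1/2) * ((3*((k:ℝ)+1)*((k:ℝ)+2)*((j:ℝ)+1)) * B lam M (j+1) (k+2)) := by
  have hjf : (0:ℝ) < j.factorial := by exact_mod_cast j.factorial_pos
  have hkf : (0:ℝ) < k.factorial := by exact_mod_cast k.factorial_pos
  apply le_of_eq
  unfold B
  rw [fac2, fac1, fac1, fac2, show (j+2)+(k+1) = (j+k)+3 by ring,
    show (j+1)+(k+2) = (j+k)+3 by ring, pow_add, pow_add, pow_add]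
  field_simp
  ring

lemma T3 {lam M : ℝ} (hl : 0 < lam) (hM : 2 ≤ M) (j k : ℕ) :
    ((j:ℝ)+1) * B lam M (j+1) k
      ≤ (1/12) * ((3*((k:ℝ)+1)*((k:ℝ)+2)*((j:ℝ)+1)) * B lam M (j+1) (k+2)) := by
  have hM0 : (0:ℝ) < M := by linarith
  have hjf : (0:ℝ) < j.factorial := by exact_mod_cast j.factorial_pos
  have hkf : (0:ℝ) < k.factorial := by exact_mod_cast k.factorial_pos
  unfold B
  rw [fac1, fac2, show (j+1)+k = (j+k)+1 by ring, show (j+1)+(k+2) = ((j+k)+1)+2 by ring,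
    pow_add M ((j+k)+1) 2, mul_div_assoc', mul_div_assoc', mul_div_assoc',
    div_le_div_iff₀ (by positivity) (by positivity)]
  have h4 : (4:ℝ) ≤ M^2 := by nlinarith
  nlinarith [mul_le_mul_of_nonneg_right h4 (show (0:ℝ) ≤ lam * (M^((j+k)+1)*((2:ℝ)⁻¹^(j+1)*((j.factorial:ℝ)*((k.factorial:ℝ)*(((j:ℝ)+1)*(((k:ℝ)+1)*((k:ℝ)+2))))))) by positivity)]

lemma B_nonneg {lam M : ℝ} (hl : 0 < lam) (hM : 2 ≤ M) (j k : ℕ) : 0 ≤ B lam M j k := by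
  have : (0:ℝ) < M := by linarith
  unfold B; positivity

noncomputable def nextRow (lam : ℝ) (k : ℕ) (r0 r1 : ℕ → ℝ) : ℕ → ℝ
  | 0 => 0
  | (j+1) => (lam * r0 j - ((j:ℝ)+1)*((j:ℝ)+2)*((j:ℝ)+3) * r0 (j+3)
      - ((j:ℝ)+1) * r0 (j+1) + 3*((k:ℝ)+1)*((j:ℝ)+1)*((j:ℝ)+2) * r1 (j+2))
      / (3*((k:ℝ)+1)*((k:ℝ)+2)*((j:ℝ)+1))
noncomputable def pairRows (lam : ℝ) : ℕ → ((ℕ → ℝ) × (ℕ → ℝ))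
  | 0 => (fun _ => 0, fun j => if j = 1 then -(lam/3) else 0)
  | (k+1) => ((pairRows lam k).2, nextRow lam k (pairRows lam k).1 (pairRows lam k).2)
noncomputable def A (lam : ℝ) (j k : ℕ) : ℝ := ((pairRows lam k).1) j
lemma A_row0 (lam : ℝ) (j : ℕ) : A lam j 0 = 0 := rfl
lemma A_row1 (lam : ℝ) (j : ℕ) : A lam j 1 = if j = 1 then -(lam/3) else 0 := rfl
lemma A_rec (lam : ℝ) (j k : ℕ) :
    A lam (j+1) (k+2) = (lam * A lam j k - ((j:ℝ)+1)*((j:ℝ)+2)*((j:ℝ)+3) * A lam (j+3) k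
      - ((j:ℝ)+1) * A lam (j+1) k + 3*((k:ℝ)+1)*((j:ℝ)+1)*((j:ℝ)+2) * A lam (j+2) (k+1))
      / (3*((k:ℝ)+1)*((k:ℝ)+2)*((j:ℝ)+1)) := rfl
lemma A_col0 (lam : ℝ) (k : ℕ) : A lam 0 k = 0 := by
  match k with
  | 0 => rfl
  | 1 => rfl
  | (k+2) => rfl

lemma T1 {lam M : ℝ} (hl : 0 < lam) (hM : 2 ≤ M) (hM3 : 4*lam ≤ M^3) (j k : ℕ) :
    lam * B lam M j k ≤ (1/6) * ((3*((k:ℝ)+1)*((k:ℝ)+2)*((j:ℝ)+1)) * B lam M (j+1) (k+2)) := by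
  have hM0 : (0:ℝ) < M := by linarith
  have hjf : (0:ℝ) < j.factorial := by exact_mod_cast j.factorial_pos
  have hkf : (0:ℝ) < k.factorial := by exact_mod_cast k.factorial_pos
  unfold B
  rw [fac1 j, fac2 k, show (j+1)+(k+2) = (j+k)+3 by ring,
    pow_add M (j+k) 3, pow_succ ((2:ℝ)⁻¹) j, mul_div_assoc', mul_div_assoc', mul_div_assoc',
    div_le_div_iff₀ (by positivity) (by positivity)]
  nlinarith [mul_le_mul_of_nonneg_right hM3 (show (0:ℝ) ≤ lam * (M^(j+k)*((2:ℝ)⁻¹^j*((j.factorial:ℝ)*((k.factorial:ℝ)*(((j:ℝ)+1)*(((k:ℝ)+1)*((k:ℝ)+2))))))) by positivity)]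

lemma A_bound {lam : ℝ} (hl : 0 < lam) :
    ∀ k j, |A lam j k| ≤ B lam (2+2*lam) j k := by
  set M : ℝ := 2 + 2*lam with hMdef
  have hM : 2 ≤ M := by rw [hMdef]; linarith
  have hM0 : (0:ℝ) < M := by linarith
  have hM3 : 4*lam ≤ M^3 := by rw [hMdef]; nlinarith [mul_pos hl hl, mul_pos (mul_pos hl hl) hl]
  intro k
  induction k using Nat.strong_induction_on with
  | _ k ih =>
    match k with
    | 0 => intro j; rw [A_row0]; simpa using B_nonneg hl hM j 0
    | 1 =>
      intro j; rw [A_row1]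
      by_cases hj : j = 1
      · subst hj
        simp only [if_pos rfl, if_true, abs_neg, abs_div]
        rw [abs_of_pos hl]
        have : B lam M 1 1 = lam * M^2 / 2 := by
          unfold B; norm_num [pow_add]; ring
        rw [this]
        have : |(3:ℝ)| = 3 := by norm_num
        rw [this]
        nlinarith [mul_pos hl hl, mul_pos (mul_pos hl hl) hl, hl]
      · simp only [if_neg hj, abs_zero]; exact B_nonneg hl hM j 1
    | (k+2) =>
      have h0 := ih k (by omega)
      have h1 := ih (k+1) (by omega)
      intro j
      match j with
      | 0 => rw [A_col0]; simpa using B_nonneg hl hM 0 (k+2)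
      | (j+1) =>
        rw [A_rec, abs_div]
        have hD : |3*((k:ℝ)+1)*((k:ℝ)+2)*((j:ℝ)+1)| = 3*((k:ℝ)+1)*((k:ℝ)+2)*((j:ℝ)+1) :=
          abs_of_pos (by positivity)
        rw [hD, div_le_iff₀ (by positivity)]
        have e1 : |lam * A lam j k| ≤ lam * B lam M j k := by
          rw [abs_mul, abs_of_pos hl]
          exact mul_le_mul_of_nonneg_left (h0 j) hl.le
        have e2 : |((j:ℝ)+1)*((j:ℝ)+2)*((j:ℝ)+3) * A lam (j+3) k|
            ≤ ((j:ℝ)+1)*((j:ℝ)+2)*((j:ℝ)+3) * B lam M (j+3) k := by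
          rw [abs_mul]
          have : |((j:ℝ)+1)*((j:ℝ)+2)*((j:ℝ)+3)| = ((j:ℝ)+1)*((j:ℝ)+2)*((j:ℝ)+3) :=
            abs_of_pos (by positivity)
          rw [this]
          exact mul_le_mul_of_nonneg_left (h0 (j+3)) (by positivity)
        have e3 : |((j:ℝ)+1) * A lam (j+1) k| ≤ ((j:ℝ)+1) * B lam M (j+1) k := by
          rw [abs_mul]
          have : |((j:ℝ)+1)| = ((j:ℝ)+1) := abs_of_pos (by positivity)
          rw [this]
          exact mul_le_mul_of_nonneg_left (h0 (j+1)) (by positivity)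
        have e4 : |3*((k:ℝ)+1)*((j:ℝ)+1)*((j:ℝ)+2) * A lam (j+2) (k+1)|
            ≤ 3*((k:ℝ)+1)*((j:ℝ)+1)*((j:ℝ)+2) * B lam M (j+2) (k+1) := by
          rw [abs_mul]
          have : |3*((k:ℝ)+1)*((j:ℝ)+1)*((j:ℝ)+2)| = 3*((k:ℝ)+1)*((j:ℝ)+1)*((j:ℝ)+2) :=
            abs_of_pos (by positivity)
          rw [this]
          exact mul_le_mul_of_nonneg_left (h1 (j+2)) (by positivity)
        have tri : |lam * A lam j k - ((j:ℝ)+1)*((j:ℝ)+2)*((j:ℝ)+3) * A lam (j+3) k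
            - ((j:ℝ)+1) * A lam (j+1) k + 3*((k:ℝ)+1)*((j:ℝ)+1)*((j:ℝ)+2) * A lam (j+2) (k+1)|
            ≤ |lam * A lam j k| + |((j:ℝ)+1)*((j:ℝ)+2)*((j:ℝ)+3) * A lam (j+3) k|
              + |((j:ℝ)+1) * A lam (j+1) k|
              + |3*((k:ℝ)+1)*((j:ℝ)+1)*((j:ℝ)+2) * A lam (j+2) (k+1)| := by
          calc _ ≤ |lam * A lam j k - ((j:ℝ)+1)*((j:ℝ)+2)*((j:ℝ)+3) * A lam (j+3) k
              - ((j:ℝ)+1) * A lam (j+1) k| + |3*((k:ℝ)+1)*((j:ℝ)+1)*((j:ℝ)+2) * A lam (j+2) (k+1)| :=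
                abs_add_le _ _
            _ ≤ (|lam * A lam j k - ((j:ℝ)+1)*((j:ℝ)+2)*((j:ℝ)+3) * A lam (j+3) k|
              + |((j:ℝ)+1) * A lam (j+1) k|) + _ := by
                gcongr; exact abs_sub _ _
            _ ≤ _ := by gcongr; exact abs_sub _ _
        have hsum := le_trans tri (by linarith : _ ≤ lam * B lam M j k
          + ((j:ℝ)+1)*((j:ℝ)+2)*((j:ℝ)+3) * B lam M (j+3) k
          + ((j:ℝ)+1) * B lam M (j+1) k
          + 3*((k:ℝ)+1)*((j:ℝ)+1)*((j:ℝ)+2) * B lam M (j+2) (k+1))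
        refine hsum.trans ?_
        have i1 := T1 hl hM hM3 j k
        have i2 := T2 hl hM j k
        have i3 := T3 hl hM j k
        have i4 := T4 hl hM j k
        have hX : 0 ≤ 3*((k:ℝ)+1)*((k:ℝ)+2)*((j:ℝ)+1) * B lam M (j+1) (k+2) :=
          mul_nonneg (by positivity) (B_nonneg hl hM _ _)
        linarith

/-- The PDE identity on coefficients. -/
lemma A_pde (lam : ℝ) (j k : ℕ) :
    ((j:ℝ)+1)*((j:ℝ)+2)*((j:ℝ)+3) * A lam (j+3) k
      - 3*((j:ℝ)+1)*((j:ℝ)+2)*((k:ℝ)+1) * A lam (j+2) (k+1)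
      + 3*((j:ℝ)+1)*((k:ℝ)+1)*((k:ℝ)+2) * A lam (j+1) (k+2)
      + ((j:ℝ)+1) * A lam (j+1) k = lam * A lam j k := by
  rw [A_rec]
  have h1 : (3*((k:ℝ)+1)*((k:ℝ)+2)*((j:ℝ)+1)) ≠ 0 := by positivity
  field_simp
  ring



/-- coefficient majorization -/
def Maj (K M : ℝ) (a : ℕ → ℕ → ℝ) : Prop :=
  ∀ j k, |a j k| ≤ K * M^(j+k) / (j.factorial * k.factorial)

def DX (a : ℕ → ℕ → ℝ) : ℕ → ℕ → ℝ := fun j k => ((j:ℝ)+1) * a (j+1) k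
def DD (a : ℕ → ℕ → ℝ) : ℕ → ℕ → ℝ := fun j k => ((k:ℝ)+1) * a j (k+1)

noncomputable def S (a : ℕ → ℕ → ℝ) (z : ℝ × ℝ) : ℝ :=
  ∑' q : ℕ × ℕ, a q.1 q.2 * z.1 ^ q.1 * z.2 ^ q.2


lemma maj_DX {K M : ℝ} {a : ℕ → ℕ → ℝ} (h : Maj K M a) (hK : 0 ≤ K) (hM : 1 ≤ M) :
    Maj (K*M) M (DX a) := by
  intro j k
  have hM0 : (0:ℝ) < M := by linarith
  have hjf : (0:ℝ) < j.factorial := by exact_mod_cast j.factorial_pos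
  have hkf : (0:ℝ) < k.factorial := by exact_mod_cast k.factorial_pos
  have h1 : |DX a j k| = ((j:ℝ)+1) * |a (j+1) k| := by
    rw [DX, abs_mul, abs_of_pos (by positivity : (0:ℝ) < (j:ℝ)+1)]
  rw [h1]
  calc ((j:ℝ)+1) * |a (j+1) k| ≤ ((j:ℝ)+1) * (K * M^((j+1)+k) / ((j+1).factorial * k.factorial)) := by
        exact mul_le_mul_of_nonneg_left (h (j+1) k) (by positivity)
    _ = K*M * M^(j+k) / (j.factorial * k.factorial) := by
        rw [fac1, show (j+1)+k = (j+k)+1 by ring, pow_succ]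
        field_simp

lemma maj_DD {K M : ℝ} {a : ℕ → ℕ → ℝ} (h : Maj K M a) (hK : 0 ≤ K) (hM : 1 ≤ M) :
    Maj (K*M) M (DD a) := by
  intro j k
  have hM0 : (0:ℝ) < M := by linarith
  have hjf : (0:ℝ) < j.factorial := by exact_mod_cast j.factorial_pos
  have hkf : (0:ℝ) < k.factorial := by exact_mod_cast k.factorial_pos
  have h1 : |DD a j k| = ((k:ℝ)+1) * |a j (k+1)| := by
    rw [DD, abs_mul, abs_of_pos (by positivity : (0:ℝ) < (k:ℝ)+1)]
  rw [h1]
  calc ((k:ℝ)+1) * |a j (k+1)| ≤ ((k:ℝ)+1) * (K * M^(j+(k+1)) / (j.factorial * (k+1).factorial)) := by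
        exact mul_le_mul_of_nonneg_left (h j (k+1)) (by positivity)
    _ = K*M * M^(j+k) / (j.factorial * k.factorial) := by
        rw [fac1, show j+(k+1) = (j+k)+1 by ring, pow_succ]
        field_simp

lemma maj_sub {K1 K2 M : ℝ} {a b : ℕ → ℕ → ℝ} (h1 : Maj K1 M a) (h2 : Maj K2 M b) :
    Maj (K1+K2) M (fun j k => a j k - b j k) := by
  intro j k
  calc |a j k - b j k| ≤ |a j k| + |b j k| := abs_sub _ _
    _ ≤ K1 * M^(j+k) / (j.factorial * k.factorial) + K2 * M^(j+k) / (j.factorial * k.factorial) :=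
        add_le_add (h1 j k) (h2 j k)
    _ = (K1+K2) * M^(j+k) / (j.factorial * k.factorial) := by ring

/-- summable exponential-type double series -/
lemma summable_exp2 (c : ℝ) (hc : 0 ≤ c) (K : ℝ) (hK : 0 ≤ K) :
    Summable (fun q : ℕ × ℕ => K * c^(q.1+q.2) / (q.1.factorial * q.2.factorial)) := by
  have h1 : Summable (fun n : ℕ => K * c^n / n.factorial) := by
    simpa [mul_div_assoc] using (Real.summable_pow_div_factorial c).mul_left K
  have h2 : Summable (fun n : ℕ => c^n / n.factorial) := Real.summable_pow_div_factorial c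
  have hnn1 : ∀ n : ℕ, 0 ≤ K * c^n / n.factorial := by
    intro n
    have : (0:ℝ) < n.factorial := by exact_mod_cast n.factorial_pos
    positivity
  have hnn2 : ∀ n : ℕ, 0 ≤ c^n / (n.factorial : ℝ) := by
    intro n
    have : (0:ℝ) < n.factorial := by exact_mod_cast n.factorial_pos
    positivity
  have := Summable.mul_of_nonneg h1 h2 hnn1 hnn2
  apply this.congr
  intro q
  have hjf : ((q.1.factorial : ℝ)) ≠ 0 := by positivity
  have hkf : ((q.2.factorial : ℝ)) ≠ 0 := by positivity
  rw [pow_add]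
  field_simp

lemma term_norm_le {K M : ℝ} {a : ℕ → ℕ → ℝ} (h : Maj K M a) (hK : 0 ≤ K) (hM : 1 ≤ M)
    {z : ℝ × ℝ} {R : ℝ} (hz1 : |z.1| ≤ R) (hz2 : |z.2| ≤ R) (hR : 0 ≤ R) (q : ℕ × ℕ) :
    |a q.1 q.2 * z.1 ^ q.1 * z.2 ^ q.2| ≤ K * (M*R)^(q.1+q.2) / (q.1.factorial * q.2.factorial) := by
  obtain ⟨j, k⟩ := q
  have hjf : (0:ℝ) < j.factorial := by exact_mod_cast j.factorial_pos
  have hkf : (0:ℝ) < k.factorial := by exact_mod_cast k.factorial_pos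
  have h1 : |a j k * z.1 ^ j * z.2 ^ k| = |a j k| * |z.1|^j * |z.2|^k := by
    rw [abs_mul, abs_mul, abs_pow, abs_pow]
  rw [h1]
  have h2 : |a j k| * |z.1|^j * |z.2|^k ≤ (K * M^(j+k) / (j.factorial * k.factorial)) * R^j * R^k := by
    have e1 : |z.1|^j ≤ R^j := pow_le_pow_left₀ (abs_nonneg _) hz1 j
    have e2 : |z.2|^k ≤ R^k := pow_le_pow_left₀ (abs_nonneg _) hz2 k
    have := mul_le_mul (mul_le_mul (h j k) e1 (by positivity) (by positivity)) e2
      (by positivity) (by positivity)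
    exact this
  refine h2.trans (le_of_eq ?_)
  rw [mul_pow, pow_add, pow_add]
  field_simp

lemma summable_term {K M : ℝ} {a : ℕ → ℕ → ℝ} (h : Maj K M a) (hK : 0 ≤ K) (hM : 1 ≤ M)
    (z : ℝ × ℝ) : Summable (fun q : ℕ × ℕ => a q.1 q.2 * z.1 ^ q.1 * z.2 ^ q.2) := by
  set R : ℝ := max |z.1| |z.2| with hR
  have hR0 : 0 ≤ R := le_trans (abs_nonneg _) (le_max_left _ _)
  apply Summable.of_norm
  apply Summable.of_nonneg_of_le (fun q => norm_nonneg _)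
    (fun q => term_norm_le h hK hM (le_max_left _ _) (le_max_right _ _) hR0 q)
  exact summable_exp2 (M*R) (by positivity) K hK

/-- shift the first index -/
lemma tsum_shift1 {f : ℕ × ℕ → ℝ} (h0 : ∀ k, f (0, k) = 0) :
    ∑' q : ℕ × ℕ, f q = ∑' q : ℕ × ℕ, f (q.1 + 1, q.2) := by
  have hinj : Function.Injective (fun q : ℕ × ℕ => (q.1+1, q.2)) := by
    intro q q' hqq'
    simpa [Prod.ext_iff] using hqq'
  have hsub : Function.support f ⊆ Set.range (fun q : ℕ × ℕ => (q.1+1, q.2)) := by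
    rintro ⟨j, k⟩ hjk
    match j with
    | 0 => exact absurd (h0 k) hjk
    | (j+1) => exact ⟨(j, k), rfl⟩
  exact (Function.Injective.tsum_eq hinj hsub).symm

lemma tsum_shift2 {f : ℕ × ℕ → ℝ} (h0 : ∀ j, f (j, 0) = 0) :
    ∑' q : ℕ × ℕ, f q = ∑' q : ℕ × ℕ, f (q.1, q.2 + 1) := by
  have hinj : Function.Injective (fun q : ℕ × ℕ => (q.1, q.2+1)) := by
    intro q q' hqq'
    simpa [Prod.ext_iff] using hqq'
  have hsub : Function.support f ⊆ Set.range (fun q : ℕ × ℕ => (q.1, q.2+1)) := by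
    rintro ⟨j, k⟩ hjk
    match k with
    | 0 => exact absurd (h0 j) hjk
    | (k+1) => exact ⟨(j, k), rfl⟩
  exact (Function.Injective.tsum_eq hinj hsub).symm

noncomputable def fstL : ℝ × ℝ →L[ℝ] ℝ := ContinuousLinearMap.fst ℝ ℝ ℝ
noncomputable def sndL : ℝ × ℝ →L[ℝ] ℝ := ContinuousLinearMap.snd ℝ ℝ ℝ

def cx (a : ℕ → ℕ → ℝ) (q : ℕ × ℕ) (w : ℝ × ℝ) : ℝ :=
  a q.1 q.2 * ((q.1:ℝ) * w.1^(q.1-1)) * w.2^q.2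
def cd (a : ℕ → ℕ → ℝ) (q : ℕ × ℕ) (w : ℝ × ℝ) : ℝ :=
  a q.1 q.2 * w.1^q.1 * ((q.2:ℝ) * w.2^(q.2-1))
noncomputable def fder (a : ℕ → ℕ → ℝ) (q : ℕ × ℕ) (w : ℝ × ℝ) : ℝ × ℝ →L[ℝ] ℝ :=
  cx a q w • fstL + cd a q w • sndL

lemma hasFDerivAt_monomial (a : ℕ → ℕ → ℝ) (q : ℕ × ℕ) (w : ℝ × ℝ) :
    HasFDerivAt (fun w : ℝ × ℝ => a q.1 q.2 * w.1 ^ q.1 * w.2 ^ q.2) (fder a q w) w := by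
  have hx : HasFDerivAt (fun w : ℝ × ℝ => w.1 ^ q.1)
      (((q.1:ℝ) * w.1^(q.1-1)) • fstL) w :=
    (hasDerivAt_pow q.1 w.1).comp_hasFDerivAt w hasFDerivAt_fst
  have hy : HasFDerivAt (fun w : ℝ × ℝ => w.2 ^ q.2)
      (((q.2:ℝ) * w.2^(q.2-1)) • sndL) w :=
    (hasDerivAt_pow q.2 w.2).comp_hasFDerivAt w hasFDerivAt_snd
  have hmul := (hx.mul hy).const_mul (a q.1 q.2)
  have hfun : (fun w : ℝ × ℝ => a q.1 q.2 * (w.1 ^ q.1 * w.2 ^ q.2))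
      = (fun w : ℝ × ℝ => a q.1 q.2 * w.1 ^ q.1 * w.2 ^ q.2) := by
    funext w; ring
  simp only [Pi.mul_apply] at hmul
  rw [hfun] at hmul
  have heq : a q.1 q.2 • (w.1 ^ q.1 • ((q.2:ℝ) * w.2 ^ (q.2 - 1)) • sndL
      + w.2 ^ q.2 • ((q.1:ℝ) * w.1 ^ (q.1 - 1)) • fstL) = fder a q w := by
    refine ContinuousLinearMap.ext fun v => ?_
    simp only [fder, cx, cd, fstL, sndL, ContinuousLinearMap.add_apply,
      ContinuousLinearMap.smul_apply, ContinuousLinearMap.coe_fst', ContinuousLinearMap.coe_snd',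
      smul_eq_mul]
    ring
  rw [heq] at hmul
  exact hmul

lemma aux_pow (j k : ℕ) {R : ℝ} (hR : 1 ≤ R) :
    (j:ℝ) * R^(j-1) * R^k ≤ 2^(j+k) * R^(j+k) := by
  have hR0 : (0:ℝ) ≤ R := by linarith
  have h1 : (j:ℝ) ≤ 2^(j+k) := by
    calc (j:ℝ) ≤ 2^j := by exact_mod_cast (Nat.lt_two_pow_self (n := j)).le
      _ ≤ 2^(j+k) := by
          exact_mod_cast Nat.pow_le_pow_right (by norm_num) (Nat.le_add_right j k)
  have h2 : R^(j-1) * R^k ≤ R^(j+k) := by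
    rw [← pow_add]
    exact pow_le_pow_right₀ hR (by omega)
  calc (j:ℝ) * R^(j-1) * R^k ≤ 2^(j+k) * (R^(j-1) * R^k) := by
        rw [mul_assoc]
        exact mul_le_mul_of_nonneg_right h1 (by positivity)
    _ ≤ 2^(j+k) * R^(j+k) := mul_le_mul_of_nonneg_left h2 (by positivity)

lemma cx_bound {K M : ℝ} {a : ℕ → ℕ → ℝ} (h : Maj K M a) (hK : 0 ≤ K) (hM : 1 ≤ M)
    {R : ℝ} (hR : 1 ≤ R) {w : ℝ × ℝ} (hw1 : |w.1| ≤ R) (hw2 : |w.2| ≤ R) (q : ℕ × ℕ) :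
    |cx a q w| ≤ K * (2*(M*R))^(q.1+q.2) / (q.1.factorial * q.2.factorial) := by
  obtain ⟨j, k⟩ := q
  have hR0 : (0:ℝ) ≤ R := by linarith
  have hjf : (0:ℝ) < j.factorial := by exact_mod_cast j.factorial_pos
  have hkf : (0:ℝ) < k.factorial := by exact_mod_cast k.factorial_pos
  have h1 : |cx a (j,k) w| = |a j k| * ((j:ℝ) * |w.1|^(j-1)) * |w.2|^k := by
    rw [cx, abs_mul, abs_mul, abs_mul, abs_pow, abs_pow, Nat.abs_cast]
  rw [h1]
  have e1 : |w.1|^(j-1) ≤ R^(j-1) := pow_le_pow_left₀ (abs_nonneg _) hw1 _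
  have e2 : |w.2|^k ≤ R^k := pow_le_pow_left₀ (abs_nonneg _) hw2 _
  have step1 : |a j k| * ((j:ℝ) * |w.1|^(j-1)) * |w.2|^k
      ≤ (K * M^(j+k) / (j.factorial * k.factorial)) * ((j:ℝ) * R^(j-1)) * R^k := by
    apply mul_le_mul
    · apply mul_le_mul (h j k)
      · exact mul_le_mul_of_nonneg_left e1 (by positivity)
      · positivity
      · positivity
    · exact e2
    · positivity
    · positivity
  refine step1.trans ?_
  have step2 : (K * M^(j+k) / (j.factorial * k.factorial)) * ((j:ℝ) * R^(j-1)) * R^k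
      = (K * M^(j+k) / (j.factorial * k.factorial)) * ((j:ℝ) * R^(j-1) * R^k) := by ring
  rw [step2]
  have step3 := aux_pow j k hR
  calc (K * M^(j+k) / (j.factorial * k.factorial)) * ((j:ℝ) * R^(j-1) * R^k)
      ≤ (K * M^(j+k) / (j.factorial * k.factorial)) * (2^(j+k) * R^(j+k)) := by
        apply mul_le_mul_of_nonneg_left step3 (by positivity)
    _ = K * (2*(M*R))^(j+k) / (j.factorial * k.factorial) := by
        rw [mul_pow, mul_pow]
        field_simp

lemma cd_bound {K M : ℝ} {a : ℕ → ℕ → ℝ} (h : Maj K M a) (hK : 0 ≤ K) (hM : 1 ≤ M)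
    {R : ℝ} (hR : 1 ≤ R) {w : ℝ × ℝ} (hw1 : |w.1| ≤ R) (hw2 : |w.2| ≤ R) (q : ℕ × ℕ) :
    |cd a q w| ≤ K * (2*(M*R))^(q.1+q.2) / (q.1.factorial * q.2.factorial) := by
  obtain ⟨j, k⟩ := q
  have hR0 : (0:ℝ) ≤ R := by linarith
  have hjf : (0:ℝ) < j.factorial := by exact_mod_cast j.factorial_pos
  have hkf : (0:ℝ) < k.factorial := by exact_mod_cast k.factorial_pos
  have h1 : |cd a (j,k) w| = |a j k| * |w.1|^j * ((k:ℝ) * |w.2|^(k-1)) := by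
    rw [cd, abs_mul, abs_mul, abs_mul, abs_pow, abs_pow, Nat.abs_cast]
  rw [h1]
  have e1 : |w.1|^j ≤ R^j := pow_le_pow_left₀ (abs_nonneg _) hw1 _
  have e2 : |w.2|^(k-1) ≤ R^(k-1) := pow_le_pow_left₀ (abs_nonneg _) hw2 _
  have step1 : |a j k| * |w.1|^j * ((k:ℝ) * |w.2|^(k-1))
      ≤ (K * M^(j+k) / (j.factorial * k.factorial)) * R^j * ((k:ℝ) * R^(k-1)) := by
    apply mul_le_mul
    · exact mul_le_mul (h j k) e1 (by positivity) (by positivity)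
    · exact mul_le_mul_of_nonneg_left e2 (by positivity)
    · positivity
    · positivity
  refine step1.trans ?_
  have step3 := aux_pow k j hR
  calc (K * M^(j+k) / (j.factorial * k.factorial)) * R^j * ((k:ℝ) * R^(k-1))
      = (K * M^(j+k) / (j.factorial * k.factorial)) * ((k:ℝ) * R^(k-1) * R^j) := by ring
    _ ≤ (K * M^(j+k) / (j.factorial * k.factorial)) * (2^(k+j) * R^(k+j)) := by
        apply mul_le_mul_of_nonneg_left step3 (by positivity)
    _ = K * (2*(M*R))^(j+k) / (j.factorial * k.factorial) := by
        rw [mul_pow, mul_pow, show k+j = j+k by ring]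
        field_simp

lemma fder_bound {K M : ℝ} {a : ℕ → ℕ → ℝ} (h : Maj K M a) (hK : 0 ≤ K) (hM : 1 ≤ M)
    {R : ℝ} (hR : 1 ≤ R) {w : ℝ × ℝ} (hw1 : |w.1| ≤ R) (hw2 : |w.2| ≤ R) (q : ℕ × ℕ) :
    ‖fder a q w‖ ≤ 2 * (K * (2*(M*R))^(q.1+q.2) / (q.1.factorial * q.2.factorial)) := by
  have h4 := cx_bound h hK hM hR hw1 hw2 q
  have h5 := cd_bound h hK hM hR hw1 hw2 q
  apply ContinuousLinearMap.opNorm_le_bound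
  · have := (abs_nonneg (cx a q w)).trans h4
    linarith
  · intro v
    have hv : ‖(fder a q w) v‖ = |cx a q w * v.1 + cd a q w * v.2| := by
      simp only [fder, cx, cd, fstL, sndL, ContinuousLinearMap.add_apply,
        ContinuousLinearMap.smul_apply, ContinuousLinearMap.coe_fst',
        ContinuousLinearMap.coe_snd', smul_eq_mul, Real.norm_eq_abs]
    rw [hv]
    have hv1 : |v.1| ≤ ‖v‖ := by
      rw [← Real.norm_eq_abs]; exact norm_fst_le v
    have hv2 : |v.2| ≤ ‖v‖ := by
      rw [← Real.norm_eq_abs]; exact norm_snd_le v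
    have hvn : (0:ℝ) ≤ ‖v‖ := norm_nonneg v
    calc |cx a q w * v.1 + cd a q w * v.2| ≤ |cx a q w * v.1| + |cd a q w * v.2| := abs_add_le _ _
      _ = |cx a q w| * |v.1| + |cd a q w| * |v.2| := by rw [abs_mul, abs_mul]
      _ ≤ |cx a q w| * ‖v‖ + |cd a q w| * ‖v‖ :=
          add_le_add (mul_le_mul_of_nonneg_left hv1 (abs_nonneg _))
            (mul_le_mul_of_nonneg_left hv2 (abs_nonneg _))
      _ ≤ (K * (2*(M*R))^(q.1+q.2) / (q.1.factorial * q.2.factorial)) * ‖v‖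
            + (K * (2*(M*R))^(q.1+q.2) / (q.1.factorial * q.2.factorial)) * ‖v‖ :=
          add_le_add (mul_le_mul_of_nonneg_right h4 hvn) (mul_le_mul_of_nonneg_right h5 hvn)
      _ = 2 * (K * (2*(M*R))^(q.1+q.2) / (q.1.factorial * q.2.factorial)) * ‖v‖ := by ring

lemma summable_cx {K M : ℝ} {a : ℕ → ℕ → ℝ} (h : Maj K M a) (hK : 0 ≤ K) (hM : 1 ≤ M)
    {R : ℝ} (hR : 1 ≤ R) {z : ℝ × ℝ} (hz1 : |z.1| ≤ R) (hz2 : |z.2| ≤ R) :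
    Summable (fun q : ℕ × ℕ => cx a q z) := by
  apply Summable.of_norm
  apply Summable.of_nonneg_of_le (fun q => norm_nonneg _)
    (fun q => cx_bound h hK hM hR hz1 hz2 q)
  exact summable_exp2 (2*(M*R)) (by positivity) K hK

lemma summable_cd {K M : ℝ} {a : ℕ → ℕ → ℝ} (h : Maj K M a) (hK : 0 ≤ K) (hM : 1 ≤ M)
    {R : ℝ} (hR : 1 ≤ R) {z : ℝ × ℝ} (hz1 : |z.1| ≤ R) (hz2 : |z.2| ≤ R) :
    Summable (fun q : ℕ × ℕ => cd a q z) := by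
  apply Summable.of_norm
  apply Summable.of_nonneg_of_le (fun q => norm_nonneg _)
    (fun q => cd_bound h hK hM hR hz1 hz2 q)
  exact summable_exp2 (2*(M*R)) (by positivity) K hK

lemma hasFDerivAt_S {K M : ℝ} {a : ℕ → ℕ → ℝ} (h : Maj K M a) (hK : 0 ≤ K) (hM : 1 ≤ M)
    (z : ℝ × ℝ) :
    HasFDerivAt (S a) ((S (DX a) z) • fstL + (S (DD a) z) • sndL) z := by
  classical
  set R : ℝ := ‖z‖ + 1 with hRdef
  have hz0 : (0:ℝ) ≤ ‖z‖ := norm_nonneg z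
  have hR1 : 1 ≤ R := by rw [hRdef]; linarith
  have hzmem : z ∈ Metric.ball (0:ℝ×ℝ) R := by
    rw [Metric.mem_ball, dist_zero_right]
    rw [hRdef]; linarith
  have hz1 : |z.1| ≤ R := by
    have := norm_fst_le z
    rw [Real.norm_eq_abs] at this
    rw [hRdef]; linarith
  have hz2 : |z.2| ≤ R := by
    have := norm_snd_le z
    rw [Real.norm_eq_abs] at this
    rw [hRdef]; linarith
  have hu : Summable (fun q : ℕ × ℕ =>
      2 * (K * (2*(M*R))^(q.1+q.2) / (q.1.factorial * q.2.factorial))) := by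
    simpa [mul_div_assoc] using (summable_exp2 (2*(M*R)) (by positivity) K hK).mul_left 2
  have key := hasFDerivAt_tsum_of_isPreconnected hu Metric.isOpen_ball
    (convex_ball (0:ℝ×ℝ) R).isPreconnected
    (fun q w _ => hasFDerivAt_monomial a q w)
    (fun q w hw => by
      rw [Metric.mem_ball, dist_zero_right] at hw
      have hw1 : |w.1| ≤ R := by
        have := norm_fst_le w
        rw [Real.norm_eq_abs] at this
        linarith
      have hw2 : |w.2| ≤ R := by
        have := norm_snd_le w
        rw [Real.norm_eq_abs] at this
        linarith
      exact fder_bound h hK hM hR1 hw1 hw2 q)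
    hzmem (summable_term h hK hM z) hzmem
  have hsx : Summable (fun q : ℕ × ℕ => cx a q z) := summable_cx h hK hM hR1 hz1 hz2
  have hsd : Summable (fun q : ℕ × ℕ => cd a q z) := summable_cd h hK hM hR1 hz1 hz2
  have h1 : (∑' q : ℕ × ℕ, fder a q z)
      = (∑' q : ℕ × ℕ, cx a q z) • fstL + (∑' q : ℕ × ℕ, cd a q z) • sndL := by
    unfold fder
    rw [Summable.tsum_add (hsx.smul_const _) (hsd.smul_const _), Summable.tsum_smul_const hsx, Summable.tsum_smul_const hsd]
  have h2 : (∑' q : ℕ × ℕ, cx a q z) = S (DX a) z := by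
    rw [tsum_shift1 (f := fun q : ℕ × ℕ => cx a q z) (fun k => by simp [cx])]
    unfold S DX cx
    congr 1
    funext q
    push_cast [Nat.add_sub_cancel]
    ring
  have h3 : (∑' q : ℕ × ℕ, cd a q z) = S (DD a) z := by
    rw [tsum_shift2 (f := fun q : ℕ × ℕ => cd a q z) (fun j => by simp [cd])]
    unfold S DD cd
    congr 1
    funext q
    push_cast [Nat.add_sub_cancel]
    ring
  rw [h1, h2, h3] at key
  exact key

lemma maj_add {K1 K2 M : ℝ} {a b : ℕ → ℕ → ℝ} (h1 : Maj K1 M a) (h2 : Maj K2 M b) :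
    Maj (K1+K2) M (fun j k => a j k + b j k) := by
  intro j k
  calc |a j k + b j k| ≤ |a j k| + |b j k| := abs_add_le _ _
    _ ≤ K1 * M^(j+k) / (j.factorial * k.factorial) + K2 * M^(j+k) / (j.factorial * k.factorial) :=
        add_le_add (h1 j k) (h2 j k)
    _ = (K1+K2) * M^(j+k) / (j.factorial * k.factorial) := by ring

lemma S_add {K1 K2 M : ℝ} {b c : ℕ → ℕ → ℝ} (hb : Maj K1 M b) (hc : Maj K2 M c)
    (hK1 : 0 ≤ K1) (hK2 : 0 ≤ K2) (hM : 1 ≤ M) (z : ℝ × ℝ) :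
    S (fun j k => b j k + c j k) z = S b z + S c z := by
  unfold S
  rw [← Summable.tsum_add (summable_term hb hK1 hM z) (summable_term hc hK2 hM z)]
  congr 1
  funext q
  ring

lemma S_sub {K1 K2 M : ℝ} {b c : ℕ → ℕ → ℝ} (hb : Maj K1 M b) (hc : Maj K2 M c)
    (hK1 : 0 ≤ K1) (hK2 : 0 ≤ K2) (hM : 1 ≤ M) (z : ℝ × ℝ) :
    S (fun j k => b j k - c j k) z = S b z - S c z := by
  unfold S
  rw [← Summable.tsum_sub (summable_term hb hK1 hM z) (summable_term hc hK2 hM z)]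
  congr 1
  funext q
  ring

lemma S_smul (lam : ℝ) (b : ℕ → ℕ → ℝ) (z : ℝ × ℝ) :
    S (fun j k => lam * b j k) z = lam * S b z := by
  unfold S
  rw [← tsum_mul_left]
  congr 1
  funext q
  ring

lemma contDiff_S {M : ℝ} (hM : 1 ≤ M) :
    ∀ (n : ℕ) {K : ℝ} {a : ℕ → ℕ → ℝ}, Maj K M a → 0 ≤ K → ContDiff ℝ n (S a) := by
  intro n
  induction n with
  | zero =>
    intro K a h hK
    rw [show ((0:ℕ) : WithTop ℕ∞) = 0 by norm_cast]
    rw [contDiff_zero]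
    rw [continuous_iff_continuousAt]
    intro z
    exact (hasFDerivAt_S h hK hM z).differentiableAt.continuousAt
  | succ n ih =>
    intro K a h hK
    rw [show ((n+1:ℕ) : WithTop ℕ∞) = (n : WithTop ℕ∞) + 1 by push_cast; ring]
    rw [contDiff_succ_iff_fderiv]
    refine ⟨fun z => (hasFDerivAt_S h hK hM z).differentiableAt, ?_, ?_⟩
    · intro hn
      exact absurd hn (by simp)
    · have hfd : (fderiv ℝ (S a)) = fun z => (S (DX a) z) • fstL + (S (DD a) z) • sndL := by
        funext z
        exact (hasFDerivAt_S h hK hM z).fderiv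
      rw [hfd]
      have c1 : ContDiff ℝ n (S (DX a)) := ih (maj_DX h hK hM) (by positivity)
      have c2 : ContDiff ℝ n (S (DD a)) := ih (maj_DD h hK hM) (by positivity)
      exact (c1.smul contDiff_const).add (c2.smul contDiff_const)

def DT (a : ℕ → ℕ → ℝ) : ℕ → ℕ → ℝ := fun j k => DX a j k - DD a j k

lemma maj_DT {K M : ℝ} {a : ℕ → ℕ → ℝ} (h : Maj K M a) (hK : 0 ≤ K) (hM : 1 ≤ M) :
    Maj (K*M + K*M) M (DT a) := maj_sub (maj_DX h hK hM) (maj_DD h hK hM)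

lemma hasDerivAt_sec1 {K M : ℝ} {a : ℕ → ℕ → ℝ} (h : Maj K M a) (hK : 0 ≤ K) (hM : 1 ≤ M)
    (y x : ℝ) :
    HasDerivAt (fun s => S a (s, y - s)) (S (DT a) (x, y - x)) x := by
  have hpath : HasDerivAt (fun s : ℝ => (s, y - s)) ((1:ℝ), (-1:ℝ)) x :=
    HasDerivAt.prodMk (hasDerivAt_id x) ((hasDerivAt_id x).const_sub y)
  have hF := hasFDerivAt_S h hK hM (x, y - x)
  have hcomp := hF.comp_hasDerivAt x hpath
  have heval : ((S (DX a) (x, y-x)) • fstL + (S (DD a) (x, y-x)) • sndL) ((1:ℝ), (-1:ℝ))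
      = S (DX a) (x, y-x) - S (DD a) (x, y-x) := by
    simp [fstL, sndL]
    ring
  rw [heval] at hcomp
  have hS : S (DT a) (x, y - x) = S (DX a) (x, y-x) - S (DD a) (x, y-x) :=
    S_sub (maj_DX h hK hM) (maj_DD h hK hM) (by positivity) (by positivity) hM _
  rw [hS]
  exact hcomp

lemma hasDerivAt_sec2 {K M : ℝ} {a : ℕ → ℕ → ℝ} (h : Maj K M a) (hK : 0 ≤ K) (hM : 1 ≤ M)
    (x r : ℝ) :
    HasDerivAt (fun t => S a (x, t - x)) (S (DD a) (x, r - x)) r := by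
  have hpath : HasDerivAt (fun t : ℝ => ((x:ℝ), t - x)) ((0:ℝ), (1:ℝ)) r :=
    HasDerivAt.prodMk (hasDerivAt_const r x) ((hasDerivAt_id r).sub_const x)
  have hF := hasFDerivAt_S h hK hM (x, r - x)
  have hcomp := hF.comp_hasDerivAt r hpath
  have heval : ((S (DX a) (x, r-x)) • fstL + (S (DD a) (x, r-x)) • sndL) ((0:ℝ), (1:ℝ))
      = S (DD a) (x, r-x) := by
    simp [fstL, sndL]
  rw [heval] at hcomp
  exact hcomp

lemma deriv_sec1 {K M : ℝ} {a : ℕ → ℕ → ℝ} (h : Maj K M a) (hK : 0 ≤ K) (hM : 1 ≤ M)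
    (y : ℝ) :
    deriv (fun s => S a (s, y - s)) = fun x => S (DT a) (x, y - x) := by
  funext x
  exact (hasDerivAt_sec1 h hK hM y x).deriv

lemma deriv_sec2 {K M : ℝ} {a : ℕ → ℕ → ℝ} (h : Maj K M a) (hK : 0 ≤ K) (hM : 1 ≤ M)
    (x : ℝ) :
    deriv (fun t => S a (x, t - x)) = fun r => S (DD a) (x, r - x) := by
  funext r
  exact (hasDerivAt_sec2 h hK hM x r).deriv


lemma S_eval_diag0 {b : ℕ → ℕ → ℝ} (h0 : ∀ j, b j 0 = 0) (x : ℝ) : S b (x, 0) = 0 := by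
  unfold S
  have : (fun q : ℕ × ℕ => b q.1 q.2 * x ^ q.1 * (0:ℝ) ^ q.2) = fun _ => 0 := by
    funext q
    obtain ⟨j, k⟩ := q
    match k with
    | 0 => simp [h0 j]
    | (k+1) => simp
  rw [this, tsum_zero]

lemma S_eval_left0 {b : ℕ → ℕ → ℝ} (h0 : ∀ k, b 0 k = 0) (d : ℝ) : S b (0, d) = 0 := by
  unfold S
  have : (fun q : ℕ × ℕ => b q.1 q.2 * (0:ℝ) ^ q.1 * d ^ q.2) = fun _ => 0 := by
    funext q
    obtain ⟨j, k⟩ := q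
    match j with
    | 0 => simp [h0 k]
    | (j+1) => simp
  rw [this, tsum_zero]

lemma S_eval_single {b : ℕ → ℕ → ℝ} (h0 : ∀ j, j ≠ 1 → b j 0 = 0) (x : ℝ) :
    S b (x, 0) = b 1 0 * x := by
  unfold S
  rw [tsum_eq_single ((1,0) : ℕ × ℕ)]
  · simp
  · intro q hq
    obtain ⟨j, k⟩ := q
    match k with
    | (k+1) => simp
    | 0 =>
      have hj : j ≠ 1 := by
        intro hj1
        exact hq (by rw [hj1])
      simp [h0 j hj]

lemma maj_A {lam : ℝ} (hl : 0 < lam) : Maj lam (2+2*lam) (A lam) := by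
  intro j k
  refine (A_bound hl k j).trans ?_
  unfold B
  have hM0 : (0:ℝ) < 2+2*lam := by linarith
  have hjf : (0:ℝ) < j.factorial := by exact_mod_cast j.factorial_pos
  have hkf : (0:ℝ) < k.factorial := by exact_mod_cast k.factorial_pos
  have h1 : (2:ℝ)⁻¹^j ≤ 1 := pow_le_one₀ (by norm_num) (by norm_num)
  calc lam * (2+2*lam)^(j+k) * (2:ℝ)⁻¹^j / (j.factorial * k.factorial)
      ≤ lam * (2+2*lam)^(j+k) * 1 / (j.factorial * k.factorial) := by gcongr
    _ = lam * (2+2*lam)^(j+k) / (j.factorial * k.factorial) := by ring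

lemma iter3 (f : ℝ → ℝ) : iteratedDeriv 3 f = deriv (deriv (deriv f)) := by
  rw [show (3:ℕ) = 2+1 from rfl, iteratedDeriv_succ', show (2:ℕ) = 1+1 from rfl,
    iteratedDeriv_succ', show (1:ℕ) = 0+1 from rfl, iteratedDeriv_succ', iteratedDeriv_zero]

end ObsKernel

open ObsKernel

/-- Existence of the observer backstepping kernel: for every `L > 0` and `λ > 0` there is a
function `p`, of class `C³` on the triangle `T = {(x,y) : 0 ≤ x ≤ L, x ≤ y ≤ L}`, satisfying
`p_xxx + p_yyy + p_x + p_y = λ p` in `T`, `p(x,x) = 0`, `p_x(x,x) = (λ/3) x` for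
`x ∈ [0,L]`, and `p(0,y) = 0` for `y ∈ [0,L]`. -/
theorem exists_observer_kernel (L lam : ℝ) (hL : 0 < L) (hlam : 0 < lam) :
    ∃ p : ℝ → ℝ → ℝ,
      ContDiffOn ℝ 3 (Function.uncurry p)
        {q : ℝ × ℝ | 0 ≤ q.1 ∧ q.1 ≤ L ∧ q.1 ≤ q.2 ∧ q.2 ≤ L} ∧
      (∀ x y : ℝ, (x, y) ∈ {q : ℝ × ℝ | 0 ≤ q.1 ∧ q.1 ≤ L ∧ q.1 ≤ q.2 ∧ q.2 ≤ L} →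
        iteratedDeriv 3 (fun s => p s y) x + iteratedDeriv 3 (fun r => p x r) y
          + deriv (fun s => p s y) x + deriv (fun r => p x r) y = lam * p x y) ∧
      (∀ x ∈ Set.Icc (0:ℝ) L, p x x = 0) ∧
      (∀ x ∈ Set.Icc (0:ℝ) L, deriv (fun s => p s x) x = lam / 3 * x) ∧
      (∀ y ∈ Set.Icc (0:ℝ) L, p 0 y = 0) := by
  classical
  set M : ℝ := 2 + 2*lam with hMdef
  have hM : 1 ≤ M := by rw [hMdef]; linarith
  set a : ℕ → ℕ → ℝ := A lam with hadef
  have h0 : Maj lam M a := maj_A hlam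
  have hK : 0 ≤ lam := hlam.le
  have h1 := maj_DT h0 hK hM
  have hK1 : (0:ℝ) ≤ lam*M + lam*M := by positivity
  have h2 := maj_DT h1 hK1 hM
  have hK2 : (0:ℝ) ≤ (lam*M + lam*M)*M + (lam*M + lam*M)*M := by positivity
  have h3 := maj_DT h2 hK2 hM
  have hK3 : (0:ℝ) ≤ ((lam*M + lam*M)*M + (lam*M + lam*M)*M)*M
      + ((lam*M + lam*M)*M + (lam*M + lam*M)*M)*M := by positivity
  have d1 := maj_DD h0 hK hM
  have hKd1 : (0:ℝ) ≤ lam*M := by positivity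
  have d2 := maj_DD d1 hKd1 hM
  have hKd2 : (0:ℝ) ≤ lam*M*M := by positivity
  have d3 := maj_DD d2 hKd2 hM
  have hKd3 : (0:ℝ) ≤ lam*M*M*M := by positivity
  refine ⟨fun x y => S a (x, y - x), ?_, ?_, ?_, ?_, ?_⟩
  · -- C³ regularity
    have hc : ContDiff ℝ ((3:ℕ) : WithTop ℕ∞) (fun q : ℝ × ℝ => S a (q.1, q.2 - q.1)) :=
      (contDiff_S hM 3 h0 hK).comp (contDiff_fst.prodMk (contDiff_snd.sub contDiff_fst))
    have hc3 : ContDiff ℝ 3 (fun q : ℝ × ℝ => S a (q.1, q.2 - q.1)) := by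
      exact_mod_cast hc
    exact hc3.contDiffOn
  · -- PDE
    intro x y _
    have hsec1 : iteratedDeriv 3 (fun s => S a (s, y - s)) x
        = S (DT (DT (DT a))) (x, y - x) := by
      rw [iter3, deriv_sec1 h0 hK hM, deriv_sec1 h1 hK1 hM, deriv_sec1 h2 hK2 hM]
    have hsec2 : iteratedDeriv 3 (fun r => S a (x, r - x)) y
        = S (DD (DD (DD a))) (x, y - x) := by
      rw [iter3, deriv_sec2 h0 hK hM, deriv_sec2 d1 hKd1 hM, deriv_sec2 d2 hKd2 hM]
    have hd1 : deriv (fun s => S a (s, y - s)) x = S (DT a) (x, y - x) := by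
      rw [deriv_sec1 h0 hK hM]
    have hd2 : deriv (fun r => S a (x, r - x)) y = S (DD a) (x, y - x) := by
      rw [deriv_sec2 h0 hK hM]
    rw [hsec1, hsec2, hd1, hd2]
    have c1 := (S_add h3 d3 hK3 hKd3 hM ((x, y - x) : ℝ × ℝ)).symm
    have c2 := (S_add (maj_add h3 d3) h1 (by positivity) hK1 hM ((x, y - x) : ℝ × ℝ)).symm
    have c3 := (S_add (maj_add (maj_add h3 d3) h1) d1 (by positivity) hKd1 hM
      ((x, y - x) : ℝ × ℝ)).symm
    have hcombo : (fun j k => ((DT (DT (DT a)) j k + DD (DD (DD a)) j k) + DT a j k) + DD a j k)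
        = fun j k => lam * a j k := by
      funext j k
      simp only [hadef, DT, DX, DD]
      push_cast
      linear_combination A_pde lam j k
    calc S (DT (DT (DT a))) (x, y-x) + S (DD (DD (DD a))) (x, y-x)
          + S (DT a) (x, y-x) + S (DD a) (x, y-x)
        = ((S (DT (DT (DT a))) (x, y-x) + S (DD (DD (DD a))) (x, y-x))
          + S (DT a) (x, y-x)) + S (DD a) (x, y-x) := by ring
      _ = (S (fun j k => DT (DT (DT a)) j k + DD (DD (DD a)) j k) ((x, y - x) : ℝ × ℝ)
          + S (DT a) (x, y-x)) + S (DD a) (x, y-x) := by rw [c1]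
      _ = S (fun j k => (DT (DT (DT a)) j k + DD (DD (DD a)) j k) + DT a j k)
          ((x, y - x) : ℝ × ℝ) + S (DD a) (x, y-x) := by rw [c2]
      _ = S (fun j k => ((DT (DT (DT a)) j k + DD (DD (DD a)) j k) + DT a j k) + DD a j k)
          ((x, y - x) : ℝ × ℝ) := by rw [c3]
      _ = S (fun j k => lam * a j k) ((x, y - x) : ℝ × ℝ) := by rw [hcombo]
      _ = lam * S a ((x, y - x) : ℝ × ℝ) := S_smul lam a _
  · -- p(x,x) = 0
    intro x _
    show S a (x, x - x) = 0
    rw [sub_self]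
    exact S_eval_diag0 (fun j => A_row0 lam j) x
  · -- p_x(x,x) = lam/3 x
    intro x _
    show deriv (fun s => S a (s, x - s)) x = lam / 3 * x
    rw [deriv_sec1 h0 hK hM]
    show S (DT a) (x, x - x) = lam / 3 * x
    rw [sub_self]
    have hrow : ∀ j, j ≠ 1 → DT a j 0 = 0 := by
      intro j hj
      simp [hadef, DT, DX, DD, A_row0, A_row1, hj]
    rw [S_eval_single hrow x]
    have hDT : DT a 1 0 = lam / 3 := by
      simp [hadef, DT, DX, DD, A_row0, A_row1]
    rw [hDT]
  · -- p(0,y) = 0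
    intro y _
    show S a (0, y - 0) = 0
    rw [sub_zero]
    exact S_eval_left0 (fun k => A_col0 lam k) y
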